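/- Let K ≥ 1 and let S : ℝ^K → ℝ satisfy (i) the reverse triangle inequality |S(u) − S(v)| ≤ S(|u − v|) for all u, v ∈ ℝ^K; (ii) positive homogeneity S(αu) = αS(u) for all α ≥ 0 and u ∈ ℝ^K; (iii) the map u ↦ S(|u|) is nondecreasing in each coordinate; and (iv) |S(u)| ≤ ‖u‖_∞ for all u ∈ ℝ^K. Then for every u ∈ ℝ^K with all coordinates nonnegative, S(u)² ≤ S(u ⊙ u), where u ⊙ u denotes the coordinatewise square of u. -/
import Mathlib


/-- For a scalarization `S` satisfying the reverse triangle inequality,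
positive homogeneity, coordinatewise monotonicity of `u ↦ S(|u|)`, and `|S(u)| ≤ ‖u‖_∞`,
one has `S(u)² ≤ S(u ⊙ u)` for every coordinatewise-nonnegative `u`. -/
theorem scalarization_square_bound {K : ℕ} (hK : 1 ≤ K) (S : (Fin K → ℝ) → ℝ)
    (hrev : ∀ u v : Fin K → ℝ, |S u - S v| ≤ S fun k => |u k - v k|)
    (hhom : ∀ α : ℝ, 0 ≤ α → ∀ u : Fin K → ℝ, S (α • u) = α * S u)
    (hmono : ∀ u v : Fin K → ℝ, (∀ k, |u k| ≤ |v k|) →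
      S (fun k => |u k|) ≤ S fun k => |v k|)
    (hbound : ∀ u : Fin K → ℝ, |S u| ≤ ‖u‖) :
    ∀ u : Fin K → ℝ, (∀ k, 0 ≤ u k) → (S u) ^ 2 ≤ S fun k => (u k) ^ 2 := by
  intro u hu
  set t := S u with htdef
  -- S 0 = 0
  have hS0 : S 0 = 0 := by
    have := hhom 0 le_rfl 0
    simpa using this
  -- t ≥ 0
  have ht0 : 0 ≤ t := by
    have h := hrev u 0
    have habs : (fun k => |u k - (0 : Fin K → ℝ) k|) = u := by
      funext k; simp [abs_of_nonneg (hu k)]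
    rw [habs, hS0, sub_zero] at h
    exact le_trans (abs_nonneg _) h
  -- the auxiliary vector
  set v : Fin K → ℝ := fun k => max (2 * t * u k - t ^ 2) 0 with hvdef
  have hv0 : ∀ k, 0 ≤ v k := fun k => le_max_right _ _
  -- v ≤ u² coordinatewise
  have hvle : ∀ k, v k ≤ u k ^ 2 := by
    intro k
    apply max_le _ (sq_nonneg _)
    nlinarith [sq_nonneg (u k - t)]
  -- S v ≤ S u²
  have hmain : S v ≤ S fun k => u k ^ 2 := by
    have h := hmono v (fun k => u k ^ 2) (by
      intro k
      rw [abs_of_nonneg (hv0 k), abs_of_nonneg (sq_nonneg (u k))]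
      exact hvle k)
    have h1 : (fun k => |v k|) = v := by funext k; exact abs_of_nonneg (hv0 k)
    have h2 : (fun k => |(fun k => u k ^ 2) k|) = fun k => u k ^ 2 := by
      funext k; exact abs_of_nonneg (sq_nonneg _)
    rwa [h1, h2] at h
  -- S ((2t) • u) = 2 t²
  have hsc : S ((2 * t) • u) = 2 * t * t :=
    hhom (2 * t) (by linarith) u
  -- |(2t u k) - v k| ≤ t²
  have hcoord : ∀ k, |((2 * t) • u) k - v k| ≤ t ^ 2 := by
    intro k
    rcases le_or_gt 0 (2 * t * u k - t ^ 2) with h | h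
    · rw [show v k = 2 * t * u k - t ^ 2 from max_eq_left h]
      simp only [Pi.smul_apply, smul_eq_mul]
      rw [show 2 * t * u k - (2 * t * u k - t ^ 2) = t ^ 2 by ring]
      rw [abs_of_nonneg (sq_nonneg t)]
    · rw [show v k = 0 from max_eq_right (by linarith)]
      simp only [Pi.smul_apply, smul_eq_mul, sub_zero]
      rw [abs_of_nonneg (by nlinarith [hu k, ht0] : (0:ℝ) ≤ 2 * t * u k)]
      linarith
  -- S of the difference is ≤ t²
  have hdiff : S (fun k => |((2 * t) • u) k - v k|) ≤ t ^ 2 := by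
    refine le_trans (le_abs_self _) (le_trans (hbound _) ?_)
    rw [pi_norm_le_iff_of_nonneg (sq_nonneg t)]
    intro k
    simpa [Real.norm_eq_abs, abs_abs] using hcoord k
  -- reverse triangle
  have h := hrev ((2 * t) • u) v
  rw [hsc] at h
  have h' : 2 * t * t - S v ≤ t ^ 2 :=
    le_trans (le_trans (le_abs_self _) h) hdiff
  have : t ^ 2 ≤ S v := by nlinarith
  exact le_trans this hmain
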